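/- Let p : X̃ → X be a generalized universal covering with X̃ contractible, and G its deck transformation group. Then the augmented complex 0 → ℝ → 𝓒_b^0(X̃) → 𝓒_b^1(X̃) → ⋯ of bounded Borel-measurable cochains on X̃, with the standard coboundary, is a strong resolution of the trivial G-module ℝ: there exist linear contracting homotopies κ^i : 𝓒_b^i(X̃) → 𝓒_b^{i−1}(X̃) with ‖κ^i‖ ≤ 1, δ_{i−1}κ^i + κ^{i+1}δ_i = id for all i ≥ 0, and κ^0 δ_{−1} = id. -/

import Mathlib

open scoped Classical

open SimplexCategory CategoryTheory

noncomputable def Del (n : ℕ) : TopCat := SimplexCategory.toTop₀.obj (SimplexCategory.mk n)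

noncomputable def face {X : TopCat} {n : ℕ} (j : Fin (n + 2)) (σ : C(Del (n+1), X)) :
    C(Del n, X) :=
  σ.comp (SimplexCategory.toTop₀.map (SimplexCategory.δ j)).hom

noncomputable def vert {n : ℕ} (j : Fin (n + 1)) : Del n :=
  ⟨fun i => if i = j then 1 else 0, by
    refine ⟨fun i => ?_, ?_⟩
    · dsimp only
      split_ifs <;> norm_num
    · simp [Finset.sum_ite_eq']⟩

noncomputable def bdry (X : TopCat) (n : ℕ) (c : C(Del (n+1), X) →₀ ℝ) :
    C(Del n, X) →₀ ℝ :=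
  ∑ j : Fin (n + 2), ((-1 : ℝ) ^ (j : ℕ)) • Finsupp.mapDomain (face j) c

/-- Borel measurability of a cochain, with respect to the Borel σ-algebra of the
compact-open topology on the space of singular simplices. -/
def Mbl (Y : TopCat) (n : ℕ) (f : C(Del n, Y) → ℝ) : Prop :=
  @Measurable _ _ (borel C(Del n, Y)) _ f

/-- The simplicial coboundary operator on (measurable bounded) cochains. -/
noncomputable def cobd (Y : TopCat) (n : ℕ) (f : C(Del n, Y) → ℝ) :
    C(Del (n + 1), Y) → ℝ :=
  fun σ => ∑ j : Fin (n + 2), ((-1 : ℝ) ^ (j : ℕ)) * f (face j σ)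


section AuxStrongRes
open scoped NNReal
open Topology

namespace StrongRes

/-- coordinates of a point of the simplex -/
def cf {n : ℕ} (x : Del n) : Fin (n+1) → ℝ≥0 := fun i => ⟨x.1 i, x.2.1 i⟩

lemma cf_sum {n : ℕ} (x : Del n) : ∑ i, cf x i = 1 := by
  apply NNReal.coe_injective
  rw [NNReal.coe_sum, NNReal.coe_one]
  exact x.2.2

lemma cf_ext {n : ℕ} {x y : Del n} (h : cf x = cf y) : x = y :=
  Subtype.ext (funext fun i => congrArg (fun f => (f i : ℝ)) h)

/-- a point of the simplex from nonnegative coordinates -/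
def mkD {n : ℕ} (f : Fin (n+1) → ℝ≥0) (h : ∑ i, f i = 1) : Del n :=
  ⟨fun i => (f i : ℝ), fun i => (f i).2, by rw [← NNReal.coe_sum, h, NNReal.coe_one]⟩

lemma coord {n : ℕ} (j : Fin (n+2)) (x : Del n) (k : Fin (n+2)) :
    cf ((SimplexCategory.toTop₀.map (SimplexCategory.δ j)).hom x) k
      = ∑ m ∈ Finset.univ.filter (fun m => j.succAbove m = k), cf x m := by
  apply NNReal.coe_injective
  rw [NNReal.coe_sum]
  exact FunOnFinite.linearMap_apply_apply (R := ℝ) (M := ℝ) _ x.1 k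

lemma coord_zero_zero {n : ℕ} (x : Del n) :
    cf ((SimplexCategory.toTop₀.map (SimplexCategory.δ (0 : Fin (n+2)))).hom x) 0 = 0 := by
  rw [coord, Finset.sum_eq_zero]
  intro m hm
  rw [Finset.mem_filter, Fin.zero_succAbove] at hm
  exact absurd hm.2 (Fin.succ_ne_zero m)

lemma coord_zero_succ {n : ℕ} (x : Del n) (k : Fin (n+1)) :
    cf ((SimplexCategory.toTop₀.map (SimplexCategory.δ (0 : Fin (n+2)))).hom x) k.succ = cf x k := by
  rw [coord, Finset.sum_eq_single k]
  · intro m hm hne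
    simp only [Finset.mem_filter, Fin.zero_succAbove, Fin.succ_inj] at hm
    exact absurd hm.2 hne
  · intro h
    simp only [Finset.mem_filter, Finset.mem_univ, true_and, Fin.zero_succAbove,
      Fin.succ_inj] at h
    exact absurd trivial h

lemma coord_succ_zero {n : ℕ} (j : Fin (n+1)) (x : Del n) :
    cf ((SimplexCategory.toTop₀.map (SimplexCategory.δ j.succ)).hom x) 0 = cf x 0 := by
  rw [coord, Finset.sum_eq_single 0]
  · intro m hm hne
    simp only [Finset.mem_filter] at hm
    rcases Fin.eq_zero_or_eq_succ m with h | ⟨m', rfl⟩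
    · exact absurd h hne
    · rw [Fin.succ_succAbove_succ] at hm
      exact absurd hm.2 (Fin.succ_ne_zero _)
  · intro h
    simp only [Finset.mem_filter, Finset.mem_univ, true_and, Fin.succ_succAbove_zero] at h
    exact absurd trivial h

lemma coord_succ_succ {n : ℕ} (j : Fin (n+2)) (x : Del (n+1)) (k : Fin (n+2)) :
    cf ((SimplexCategory.toTop₀.map (SimplexCategory.δ j.succ)).hom x) k.succ
      = ∑ m ∈ Finset.univ.filter (fun m => j.succAbove m = k), cf x m.succ := by
  rw [coord, Finset.sum_filter, Finset.sum_filter, Fin.sum_univ_succ]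
  have h0 : (if j.succ.succAbove 0 = k.succ then cf x 0 else 0) = 0 := by
    rw [if_neg]
    rw [Fin.succ_succAbove_zero]
    exact (Fin.succ_ne_zero k).symm
  rw [h0, zero_add]
  apply Finset.sum_congr rfl
  intro m _
  rw [Fin.succ_succAbove_succ]
  simp [Fin.succ_inj]



-- basic facts about simplices
lemma cf_le_one {n : ℕ} (t : Del n) (k : Fin (n+1)) : cf t k ≤ 1 := by
  calc cf t k ≤ ∑ i, cf t i :=
        Finset.single_le_sum (fun j _ => zero_le) (Finset.mem_univ k)
    _ = 1 := cf_sum t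

lemma sum_tail {n : ℕ} (t : Del (n+1)) : ∑ i : Fin (n+1), cf t i.succ = 1 - cf t 0 := by
  have h := cf_sum t
  rw [Fin.sum_univ_succ] at h
  exact eq_tsub_of_add_eq (by rw [add_comm]; exact h)

lemma one_sub_ne_zero {n : ℕ} {t : Del (n+1)} (h : cf t 0 ≠ 1) : (1 : ℝ≥0) - cf t 0 ≠ 0 := by
  intro hc
  rw [tsub_eq_zero_iff_le] at hc
  exact h (le_antisymm (cf_le_one t 0) hc)

lemma isCompact_simplex (n : ℕ) : IsCompact {f : Fin (n+1) → ℝ≥0 | ∑ i, f i = 1} := by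
  have hsub : {f : Fin (n+1) → ℝ≥0 | ∑ i, f i = 1}
      ⊆ Set.pi Set.univ (fun _ => Set.Icc (0:ℝ≥0) 1) := by
    intro f hf i _
    refine ⟨zero_le, ?_⟩
    calc f i ≤ ∑ j, f j :=
          Finset.single_le_sum (fun j _ => zero_le) (Finset.mem_univ i)
      _ = 1 := hf
  refine IsCompact.of_isClosed_subset (isCompact_univ_pi fun _ => isCompact_Icc) ?_ hsub
  have : {f : Fin (n+1) → ℝ≥0 | ∑ i, f i = 1}
      = (fun f : Fin (n+1) → ℝ≥0 => ∑ i, f i) ⁻¹' {1} := rfl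
  rw [this]
  exact IsClosed.preimage (by continuity) isClosed_singleton

instance DelCompact (n : ℕ) : CompactSpace (Del n) :=
  inferInstanceAs (CompactSpace (stdSimplex ℝ (Fin (n+1))))

instance DelT2 (n : ℕ) : T2Space (Del n) :=
  inferInstanceAs (T2Space (stdSimplex ℝ (Fin (n+1))))


section Cone

variable {Xt : TopCat} (x0 : Xt)
variable (H : ContinuousMap.Homotopy (ContinuousMap.id Xt) (ContinuousMap.const Xt x0))

/-- renormalized "tail" of a point in the (n+1)-simplex -/
noncomputable def nrm {n : ℕ} (t : Del (n+1)) (h : cf t 0 ≠ 1) : Del n :=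
  mkD (fun i : Fin (n+1) => cf t i.succ / (1 - cf t 0)) (by
    show ∑ i, cf t (Fin.succ i) / (1 - cf t 0) = 1
    rw [← Finset.sum_div, sum_tail, div_self (one_sub_ne_zero h)])

lemma cf_nrm {n : ℕ} (t : Del (n+1)) (h : cf t 0 ≠ 1) (i : Fin (n+1)) :
    cf (nrm t h) i = cf t i.succ / (1 - cf t 0) := rfl

/-- the quotient map (cone parameter at vertex 0) -/
noncomputable def qm {n : ℕ} : Del n × unitInterval → Del (n+1) := fun p =>
  mkD (Fin.cons (Real.toNNReal p.2) (fun j => Real.toNNReal (1 - p.2) * cf p.1 j) :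
      Fin (n+2) → ℝ≥0) (by
    show ∑ i : Fin (n+2), _ = 1
    rw [Fin.sum_univ_succ]
    simp only [Fin.cons_zero, Fin.cons_succ]
    rw [← Finset.mul_sum, cf_sum, mul_one, ← Real.toNNReal_add p.2.2.1 (by
      have := p.2.2.2; linarith)]
    norm_num)

lemma cf_qm_zero {n : ℕ} (p : Del n × unitInterval) :
    cf (qm p) 0 = Real.toNNReal p.2 := rfl

lemma cf_qm_succ {n : ℕ} (p : Del n × unitInterval) (j : Fin (n+1)) :
    cf (qm p) j.succ = Real.toNNReal (1 - p.2) * cf p.1 j := by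
  show (Fin.cons (Real.toNNReal p.2)
    (fun j => Real.toNNReal (1 - p.2) * cf p.1 j) : Fin (n+2) → ℝ≥0) j.succ = _
  rw [Fin.cons_succ]

lemma continuous_qm {n : ℕ} : Continuous (qm (n := n)) := by
  apply Continuous.subtype_mk
  apply continuous_pi
  intro i
  induction i using Fin.cases with
  | zero =>
      simp only [Fin.cons_zero]
      refine NNReal.continuous_coe.comp ?_
      exact continuous_real_toNNReal.comp (continuous_subtype_val.comp continuous_snd)
  | succ j =>
      simp only [Fin.cons_succ]
      refine NNReal.continuous_coe.comp ?_
      apply Continuous.mul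
      · exact continuous_real_toNNReal.comp
          ((continuous_const.sub continuous_subtype_val).comp continuous_snd)
      · exact (((continuous_apply j).comp continuous_subtype_val).comp continuous_fst).subtype_mk _

lemma one_sub_toNNReal (s : unitInterval) :
    (1 : ℝ≥0) - Real.toNNReal s = Real.toNNReal (1 - s) := by
  apply NNReal.coe_injective
  rw [NNReal.coe_sub (by
    rw [← Real.toNNReal_one]
    exact Real.toNNReal_le_toNNReal s.2.2)]
  rw [Real.coe_toNNReal _ s.2.1, Real.coe_toNNReal _ (by have := s.2.2; linarith)]
  norm_num

lemma qm_surj {n : ℕ} : Function.Surjective (qm (n := n)) := by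
  intro t
  by_cases h : cf t 0 = 1
  · refine ⟨(vert 0, 1), ?_⟩
    apply cf_ext; funext k
    induction k using Fin.cases with
    | zero =>
        rw [cf_qm_zero, h]
        show Real.toNNReal ((1 : unitInterval) : ℝ) = 1
        norm_num
    | succ j =>
        rw [cf_qm_succ]
        have htail : ∑ i : Fin (n+1), cf t i.succ = 0 := by rw [sum_tail, h, tsub_self]
        have : cf t j.succ = 0 :=
          (Finset.sum_eq_zero_iff.mp htail) j (Finset.mem_univ j)
        rw [this]
        show Real.toNNReal (1 - ((1 : unitInterval) : ℝ)) * _ = 0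
        norm_num
  · refine ⟨(nrm t h, ⟨(cf t 0 : ℝ), (cf t 0).2, by exact_mod_cast cf_le_one t 0⟩), ?_⟩
    apply cf_ext; funext k
    induction k using Fin.cases with
    | zero =>
        rw [cf_qm_zero]
        exact Real.toNNReal_coe
    | succ j =>
        rw [cf_qm_succ, cf_nrm]
        show Real.toNNReal (1 - (cf t 0 : ℝ)) * _ = _
        rw [show (1 : ℝ) - (cf t 0 : ℝ) = ((1 - cf t 0 : ℝ≥0) : ℝ) by
          rw [NNReal.coe_sub (cf_le_one t 0)]; norm_num]
        rw [Real.toNNReal_coe, mul_comm, div_mul_cancel₀ _ (one_sub_ne_zero h)]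

lemma qm_quot {n : ℕ} : IsQuotientMap (qm (n := n)) :=
  (continuous_qm.isClosedMap).isQuotientMap continuous_qm qm_surj

/-- the underlying function of the cone of a singular simplex -/
noncomputable def coneFun {n : ℕ} (σ : C(Del n, Xt)) (t : Del (n+1)) : Xt :=
  if h : cf t 0 = 1 then x0
  else H (⟨(cf t 0 : ℝ), (cf t 0).2, by exact_mod_cast cf_le_one t 0⟩, σ (nrm t h))

lemma coneFun_qm {n : ℕ} (σ : C(Del n, Xt)) (p : Del n × unitInterval) :
    coneFun x0 H σ (qm p) = H (p.2, σ p.1) := by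
  obtain ⟨x, s⟩ := p
  by_cases hs : (s : ℝ) = 1
  · have h0 : cf (qm (x, s)) 0 = 1 := by
      rw [cf_qm_zero]; simp [hs]
    rw [coneFun, dif_pos h0]
    rw [show s = 1 from Subtype.ext hs, H.apply_one]
    rfl
  · have h0 : cf (qm (x, s)) 0 ≠ 1 := by
      rw [cf_qm_zero]
      intro hc
      apply hs
      have := congrArg (fun a : ℝ≥0 => (a : ℝ)) hc
      simpa [Real.coe_toNNReal _ s.2.1] using this
    rw [coneFun, dif_neg h0]
    congr 1
    apply Prod.ext
    · apply Subtype.ext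
      show ((cf (qm (x, s)) 0 : ℝ≥0) : ℝ) = (s : ℝ)
      rw [cf_qm_zero, Real.coe_toNNReal _ s.2.1]
    · show σ _ = σ x
      congr 1
      apply cf_ext; funext k
      rw [cf_nrm, cf_qm_succ, cf_qm_zero, one_sub_toNNReal]
      rw [mul_comm, mul_div_assoc, div_self (ne_of_gt (Real.toNNReal_pos.mpr
        (by have h2 := s.2.2; cases lt_or_eq_of_le h2 with
            | inl h => linarith
            | inr h => exact absurd h hs))), mul_one]

/-- the cone over a singular simplex, as a continuous map -/
noncomputable def cone {n : ℕ} (σ : C(Del n, Xt)) : C(Del (n+1), Xt) :=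
  ⟨coneFun x0 H σ, by
    rw [qm_quot.continuous_iff]
    have he : coneFun x0 H σ ∘ qm = fun p : Del n × unitInterval => H (p.2, σ p.1) :=
      funext (coneFun_qm x0 H σ)
    rw [he]
    exact H.continuous.comp (continuous_snd.prodMk (σ.continuous.comp continuous_fst))⟩

lemma cone_apply {n : ℕ} (σ : C(Del n, Xt)) (t : Del (n+1)) :
    cone x0 H σ t = coneFun x0 H σ t := rfl

/-- the cone construction is continuous in the compact-open topologies -/
lemma continuous_cone {n : ℕ} : Continuous (cone x0 H (n := n)) := by
  rw [ContinuousMap.continuous_compactOpen]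
  intro K hK U hU
  -- the auxiliary map σ ↦ (p ↦ H (p.2, σ p.1))
  have hGc : ∀ σ : C(Del n, Xt),
      Continuous fun p : Del n × unitInterval => H (p.2, σ p.1) := fun σ =>
    H.continuous.comp (continuous_snd.prodMk (σ.continuous.comp continuous_fst))
  set G : C(Del n, Xt) → C(Del n × unitInterval, Xt) := fun σ => ⟨_, hGc σ⟩ with hG
  have hGcont : Continuous G := by
    apply ContinuousMap.continuous_of_continuous_uncurry
    exact H.continuous.comp ((continuous_snd.comp continuous_snd).prodMk
      (ContinuousEval.continuous_eval.comp
        (continuous_fst.prodMk (continuous_fst.comp continuous_snd))))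
  have key : {σ : C(Del n, Xt) | Set.MapsTo (cone x0 H σ) K U}
      = G ⁻¹' {ρ : C(Del n × unitInterval, Xt) | Set.MapsTo ρ (qm ⁻¹' K) U} := by
    ext σ
    constructor
    · intro hσ p hp
      show H (p.2, σ p.1) ∈ U
      rw [← coneFun_qm x0 H σ p]
      exact hσ hp
    · intro hσ t ht
      obtain ⟨p, rfl⟩ := qm_surj t
      have := hσ (show p ∈ qm ⁻¹' K from ht)
      rw [cone_apply, coneFun_qm]
      exact this
  rw [key]
  exact (ContinuousMap.isOpen_setOf_mapsTo
    ((hK.isClosed.preimage continuous_qm).isCompact) hU).preimage hGcont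

lemma face_cone_zero {n : ℕ} (σ : C(Del n, Xt)) : face 0 (cone x0 H σ) = σ := by
  ext x
  show coneFun x0 H σ ((SimplexCategory.toTop₀.map (SimplexCategory.δ 0)).hom x) = σ x
  set t : Del (n+1) := (SimplexCategory.toTop₀.map (SimplexCategory.δ (0 : Fin (n+2)))).hom x with ht
  have h0 : cf t 0 = 0 := coord_zero_zero x
  have hne : cf t 0 ≠ 1 := by rw [h0]; exact zero_ne_one
  rw [coneFun, dif_neg hne]
  have hI : (⟨(cf t 0 : ℝ), (cf t 0).2, by exact_mod_cast cf_le_one t 0⟩ : unitInterval)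
      = 0 := by
    apply Subtype.ext
    show ((cf t 0 : ℝ≥0) : ℝ) = 0
    rw [h0]; norm_num
  rw [hI, H.apply_zero]
  show σ _ = σ x
  congr 1
  apply cf_ext; funext k
  rw [cf_nrm, h0, tsub_zero, div_one, coord_zero_succ]

lemma face_cone_succ {n : ℕ} (σ : C(Del (n+1), Xt)) (j : Fin (n+2)) :
    face j.succ (cone x0 H σ) = cone x0 H (face j σ) := by
  ext x
  show coneFun x0 H σ ((SimplexCategory.toTop₀.map (SimplexCategory.δ j.succ)).hom x)
    = coneFun x0 H (face j σ) x
  set t : Del (n+1+1) := (SimplexCategory.toTop₀.map (SimplexCategory.δ j.succ)).hom x with ht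
  have h0 : cf t 0 = cf x 0 := coord_succ_zero j x
  by_cases h : cf x 0 = 1
  · rw [coneFun, dif_pos (h0.trans h), coneFun, dif_pos h]
  · have hne : cf t 0 ≠ 1 := by rw [h0]; exact h
    rw [coneFun, dif_neg hne, coneFun, dif_neg h]
    congr 1
    apply Prod.ext
    · apply Subtype.ext
      show ((cf t 0 : ℝ≥0) : ℝ) = ((cf x 0 : ℝ≥0) : ℝ)
      exact congrArg (fun a : ℝ≥0 => (a : ℝ)) h0
    · show σ _ = σ _
      congr 1
      apply cf_ext; funext k
      rw [cf_nrm, coord_succ_succ, h0]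
      refine Eq.trans ?_ (coord j (nrm x h) k).symm
      rw [Finset.sum_div]
      rfl

lemma face_one_cone (σ : C(Del 0, Xt)) :
    face 1 (cone x0 H σ) = ContinuousMap.const (Del 0) x0 := by
  ext x
  show coneFun x0 H σ ((SimplexCategory.toTop₀.map (SimplexCategory.δ (1 : Fin 2))).hom x) = x0
  have h1 : (1 : Fin 2) = (0 : Fin 1).succ := rfl
  have h0 : cf ((SimplexCategory.toTop₀.map (SimplexCategory.δ (1 : Fin 2))).hom x) 0 = cf x 0 := by
    rw [h1]; exact coord_succ_zero 0 x
  have hx : cf x 0 = 1 := by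
    have := cf_sum x
    rwa [Fin.sum_univ_one] at this
  exact dif_pos (h0.trans hx)

end Cone

end StrongRes
end AuxStrongRes

/-- Let `p : X̃ → X` be a generalized universal covering with `X̃`
contractible and `G` its deck group.  Then the augmented complex
`0 → ℝ → 𝓒_b^0(X̃) → 𝓒_b^1(X̃) → ⋯` of bounded Borel-measurable cochains on `X̃` is a strong
resolution of the trivial `G`-module `ℝ`: there are linear contracting homotopies
`κ⁰, κⁱ` of norm ≤ 1 (preserving measurability and bounds) with `κ⁰ ∘ δ₋₁ = id`,
`δ₋₁ κ⁰ + κ¹ δ₀ = id` and `δ_{i-1} κ^i + κ^{i+1} δ_i = id`. -/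


theorem measurable_bounded_cochains_strong_resolution
    (X Xt : TopCat) [ContractibleSpace Xt]
    [SimplyConnectedSpace Xt] [LocallyPathConnectedSpace Xt]
    (p : C(Xt, X)) (hsurj : Function.Surjective p)
    (G : Type) [Group G] [MulAction G Xt]
    (hact : ∀ g : G, Continuous (fun x : Xt => g • x))
    (hdeck : ∀ (g : G) (x : Xt), p (g • x) = p x)
    (hfib : ∀ x y : Xt, p x = p y → ∃! g : G, g • x = y) :
    ∃ (κ : ∀ i : ℕ, (C(Del (i + 1), Xt) → ℝ) → (C(Del i, Xt) → ℝ))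
      (κ0 : (C(Del 0, Xt) → ℝ) → ℝ),
      -- linearity
      (∀ i f g, κ i (f + g) = κ i f + κ i g) ∧
      (∀ i (c : ℝ) f, κ i (c • f) = c • κ i f) ∧
      (∀ f g, κ0 (f + g) = κ0 f + κ0 g) ∧ (∀ (c : ℝ) f, κ0 (c • f) = c * κ0 f) ∧
      -- the homotopies preserve Borel measurability
      (∀ i f, Mbl Xt (i + 1) f → Mbl Xt i (κ i f)) ∧
      -- norm at most one
      (∀ i f (C : ℝ), (∀ σ, |f σ| ≤ C) → ∀ σ, |κ i f σ| ≤ C) ∧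
      (∀ f (C : ℝ), (∀ σ, |f σ| ≤ C) → |κ0 f| ≤ C) ∧
      -- κ⁰ ∘ δ₋₁ = id
      (∀ r : ℝ, κ0 (fun _ => r) = r) ∧
      -- δ₋₁ κ⁰ + κ¹ δ₀ = id
      (∀ (f : C(Del 0, Xt) → ℝ) σ, κ0 f + κ 0 (cobd Xt 0 f) σ = f σ) ∧
      -- δ_{i-1} κ^i + κ^{i+1} δ_i = id for i ≥ 1
      (∀ (i : ℕ) (f : C(Del (i + 1), Xt) → ℝ) σ,
        cobd Xt i (κ i f) σ + κ (i + 1) (cobd Xt (i + 1) f) σ = f σ) := by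
  obtain ⟨x0, hnull⟩ := id_nullhomotopic Xt
  obtain ⟨H⟩ := hnull
  refine ⟨fun i f σ => f (StrongRes.cone x0 H σ),
    fun f => f (ContinuousMap.const (Del 0) x0),
    fun i f g => rfl, fun i c f => rfl, fun f g => rfl, fun c f => rfl,
    ?_, fun i f C hC σ => hC _, fun f C hC => hC _, fun r => rfl, ?_, ?_⟩
  · -- measurability
    intro i f hf
    have hc : @Measurable C(Del i, Xt) C(Del (i+1), Xt) (borel _) (borel _)
        (StrongRes.cone x0 H) :=
      (StrongRes.continuous_cone x0 H).borel_measurable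
    exact @Measurable.comp _ _ _ (borel _) (borel _) _ _ _ hf hc
  · -- degree 0 identity
    intro f σ
    show f (ContinuousMap.const (Del 0) x0) + cobd Xt 0 f (StrongRes.cone x0 H σ) = f σ
    rw [cobd]
    rw [Fin.sum_univ_two]
    rw [StrongRes.face_cone_zero, StrongRes.face_one_cone]
    norm_num
  · -- higher identities
    intro i f σ
    show (∑ j : Fin (i+2), (-1:ℝ)^(j:ℕ) * f (StrongRes.cone x0 H (face j σ)))
      + (∑ j : Fin (i+3), (-1:ℝ)^(j:ℕ) * f (face j (StrongRes.cone x0 H σ))) = f σ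
    have h2 : (∑ j : Fin (i+3), (-1:ℝ)^(j:ℕ) * f (face j (StrongRes.cone x0 H σ)))
        = f σ + ∑ j : Fin (i+2), (-1:ℝ)^(j:ℕ) * -1 * f (StrongRes.cone x0 H (face j σ)) := by
      rw [Fin.sum_univ_succ]
      simp only [Fin.val_zero, pow_zero, one_mul, StrongRes.face_cone_zero, Fin.val_succ,
        pow_succ, StrongRes.face_cone_succ]
    rw [h2]
    have hS : ∑ j : Fin (i+2), (-1:ℝ)^(j:ℕ) * -1 * f (StrongRes.cone x0 H (face j σ))
        = -∑ j : Fin (i+2), (-1:ℝ)^(j:ℕ) * f (StrongRes.cone x0 H (face j σ)) := by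
      rw [← Finset.sum_neg_distrib]
      exact Finset.sum_congr rfl fun j _ => by ring
    rw [hS]
    ring
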